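/- There exists a universal constant C > 0 with the following property. Let p ≥ 2, let X = (X_1,…,X_p) be a mean-zero random vector with max_{i≤p} E[X_i^4] < ∞, set σ_{ij} = E[X_i X_j], and let v > 0 satisfy v² ≥ max_{i,j≤p} Var(X_i X_j). Let X^{(1)},…,X^{(n)} be n i.i.d. copies of X, let δ ∈ (0,1), set α = sqrt(n v² / log(p²/δ)), and for each pair (i,j) let σ̂_{ij} be any minimizer over x ∈ ℝ of x ↦ Σ_{t=1}^n l_α(X_i^{(t)} X_j^{(t)} − x). Then whenever n ≥ C·log(p/δ), with probability at least 1 − δ, max_{i,j≤p} |σ̂_{ij} − σ_{ij}| ≤ C·v·sqrt((log p + log(1/δ))/n). -/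

import Mathlib

open MeasureTheory Filter ProbabilityTheory

/-- The Huber loss with parameter `α`: `l_α(x) = x²` if `|x| ≤ α`,
and `2α|x| − α²` otherwise. -/
noncomputable def huberLoss (α x : ℝ) : ℝ := if |x| ≤ α then x ^ 2 else 2 * α * |x| - α ^ 2

noncomputable def hclamp (α x : ℝ) : ℝ := max (-α) (min α x)

lemma hclamp_abs_le {α : ℝ} (hα : 0 ≤ α) (x : ℝ) : |hclamp α x| ≤ α := by
  rw [abs_le]; unfold hclamp
  constructor
  · exact le_max_left _ _
  · exact max_le (by linarith) (min_le_left _ _)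

lemma hclamp_abs_le_abs {α : ℝ} (hα : 0 ≤ α) (x : ℝ) : |hclamp α x| ≤ |x| := by
  unfold hclamp
  rcases le_total α x with h | h
  · rw [min_eq_left h, max_eq_right (by linarith)]
    rw [abs_of_nonneg hα, abs_of_nonneg (le_trans hα h)]; exact h
  · rw [min_eq_right h]
    rcases le_total (-α) x with h2 | h2
    · rw [max_eq_right h2]
    · rw [max_eq_left h2, abs_neg, abs_of_nonneg hα, abs_of_nonpos (by linarith)]; linarith

lemma abs_hclamp_sub_le {α : ℝ} (hα : 0 < α) (x : ℝ) : |hclamp α x - x| ≤ x ^ 2 / α := by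
  rw [le_div_iff₀ hα]
  unfold hclamp
  rcases le_total α x with h | h
  · rw [min_eq_left h, max_eq_right (by linarith)]
    rw [abs_of_nonpos (by linarith)]
    nlinarith
  · rw [min_eq_right h]
    rcases le_total (-α) x with h2 | h2
    · rw [max_eq_right h2]; rw [sub_self, abs_zero, zero_mul]; positivity
    · rw [max_eq_left h2, abs_of_nonneg (by linarith)]
      nlinarith [sq_nonneg (x + α)]
lemma huber_grad_ineq {α : ℝ} (hα : 0 ≤ α) (x y : ℝ) :
    huberLoss α x + 2 * hclamp α x * (y - x) ≤ huberLoss α y := by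
  unfold huberLoss hclamp
  rcases le_or_gt (|x|) α with hx | hx <;> rcases le_or_gt (|y|) α with hy | hy
  · rw [if_pos hx, if_pos hy]
    have : min α x = x := min_eq_right (abs_le.mp hx).2
    rw [this, max_eq_right (abs_le.mp hx).1]
    nlinarith [sq_nonneg (y - x)]
  · rw [if_pos hx, if_neg (not_le.mpr hy)]
    have : min α x = x := min_eq_right (abs_le.mp hx).2
    rw [this, max_eq_right (abs_le.mp hx).1]
    rcases abs_cases y with ⟨hy1, _⟩ | ⟨hy1, _⟩ <;> rcases abs_le.mp hx with ⟨hx1, hx2⟩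
    · nlinarith [sq_nonneg (x - α)]
    · nlinarith [sq_nonneg (x + α)]
  · rw [if_neg (not_le.mpr hx), if_pos hy]
    rcases abs_cases x with ⟨hx1, _⟩ | ⟨hx1, _⟩
    · have hxa : α < x := by rw [hx1] at hx; exact hx
      have : min α x = α := min_eq_left hxa.le
      rw [this, max_eq_right (by linarith)]
      nlinarith [sq_nonneg (y - α)]
    · have hxa : x < -α := by rw [hx1] at hx; linarith
      have : min α x = x := min_eq_right (by linarith)
      rw [this, max_eq_left (by linarith)]
      nlinarith [sq_nonneg (y + α)]
  · rw [if_neg (not_le.mpr hx), if_neg (not_le.mpr hy)]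
    rcases abs_cases x with ⟨hx1, _⟩ | ⟨hx1, _⟩
    · have hxa : α < x := by rw [hx1] at hx; exact hx
      have : min α x = α := min_eq_left hxa.le
      rw [this, max_eq_right (by linarith)]
      rw [hx1]
      have := le_abs_self y
      nlinarith
    · have hxa : x < -α := by rw [hx1] at hx; linarith
      have : min α x = x := min_eq_right (by linarith)
      rw [this, max_eq_left (by linarith), hx1]
      have := neg_abs_le y
      nlinarith

lemma huber_min_not {α : ℝ} (hα : 0 ≤ α) {n : ℕ} (z : Fin n → ℝ) (θhat θ : ℝ)
    (hmin : ∀ x : ℝ, (∑ t, huberLoss α (z t - θhat)) ≤ ∑ t, huberLoss α (z t - x))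
    (h : 0 < (θ - θhat) * (∑ t, hclamp α (z t - θ))) : False := by
  have key : ∀ t : Fin n, huberLoss α (z t - θ) + 2 * hclamp α (z t - θ) * (θ - θhat)
      ≤ huberLoss α (z t - θhat) := by
    intro t
    have := huber_grad_ineq hα (z t - θ) (z t - θhat)
    have e : (z t - θhat) - (z t - θ) = θ - θhat := by ring
    rw [e] at this; exact this
  have hsum := Finset.sum_le_sum (fun t (_ : t ∈ Finset.univ) => key t)
  rw [Finset.sum_add_distrib] at hsum
  have e2 : ∑ t : Fin n, 2 * hclamp α (z t - θ) * (θ - θhat)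
      = 2 * (θ - θhat) * ∑ t : Fin n, hclamp α (z t - θ) := by
    rw [Finset.mul_sum]; apply Finset.sum_congr rfl; intro t _; ring
  rw [e2] at hsum
  have := hmin θ
  nlinarith

lemma huber_min_le {α : ℝ} (hα : 0 ≤ α) {n : ℕ} (z : Fin n → ℝ) (θhat θ : ℝ)
    (hmin : ∀ x : ℝ, (∑ t, huberLoss α (z t - θhat)) ≤ ∑ t, huberLoss α (z t - x))
    (h : (∑ t, hclamp α (z t - θ)) < 0) : θhat ≤ θ := by
  by_contra hc
  push_neg at hc
  exact huber_min_not hα z θhat θ hmin (mul_pos_of_neg_of_neg (by linarith) h)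

lemma huber_min_ge {α : ℝ} (hα : 0 ≤ α) {n : ℕ} (z : Fin n → ℝ) (θhat θ : ℝ)
    (hmin : ∀ x : ℝ, (∑ t, huberLoss α (z t - θhat)) ≤ ∑ t, huberLoss α (z t - x))
    (h : 0 < ∑ t, hclamp α (z t - θ)) : θ ≤ θhat := by
  by_contra hc
  push_neg at hc
  exact huber_min_not hα z θhat θ hmin (mul_pos (by linarith) h)

lemma exp_le_one_add_sq {x : ℝ} (hx : x ≤ 1) : Real.exp x ≤ 1 + x + x ^ 2 := by
  rcases le_total (-1) x with h | h
  · have hb := Real.exp_bound (abs_le.mpr ⟨h, hx⟩) (n := 2) (by norm_num)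
    have h1 : Real.exp x - (1 + x) ≤ |x| ^ 2 * (3 / (2 * 2)) := by
      have h2 := (abs_sub_le_iff.mp hb).1
      have h3 := le_trans (le_abs_self (Real.exp x - ∑ m ∈ Finset.range 2, x ^ m / m.factorial)) hb
      calc Real.exp x - (1 + x) = Real.exp x - ∑ m ∈ Finset.range 2, x ^ m / m.factorial := by
            simp [Finset.sum_range_succ]
        _ ≤ |x| ^ 2 * ((2 : ℕ).succ / ((2:ℕ).factorial * 2)) := by
            have := (abs_sub_le_iff.mp hb).1
            exact_mod_cast this
        _ = |x| ^ 2 * (3 / (2 * 2)) := by norm_num [Nat.factorial]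
    have : |x| ^ 2 = x ^ 2 := sq_abs x
    nlinarith
  · have h1 : Real.exp x ≤ 1 := Real.exp_le_one_iff.mpr (by linarith)
    nlinarith

lemma bdd_integrable {Ω : Type} [MeasureSpace Ω] [IsProbabilityMeasure (volume : Measure Ω)]
    {f : Ω → ℝ} (hf : Measurable f) {b : ℝ} (hb : ∀ ω, |f ω| ≤ b) :
    Integrable f := by
  exact Integrable.mono' (integrable_const b) hf.aestronglyMeasurable
    (ae_of_all _ fun ω => by simpa using hb ω)

lemma toReal_le_one {Ω : Type} [MeasureSpace Ω] [IsProbabilityMeasure (volume : Measure Ω)]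
    (s : Set Ω) : (volume s).toReal ≤ 1 :=
  le_trans (ENNReal.toReal_mono (measure_ne_top _ _) (measure_mono (Set.subset_univ s)))
    (by simp)

lemma chernoff_bdd {Ω : Type} [MeasureSpace Ω] [IsProbabilityMeasure (volume : Measure Ω)]
    {n : ℕ} (W : Fin n → Ω → ℝ)
    (hWmeas : ∀ t, Measurable (W t))
    (hindep : iIndepFun W volume)
    (b m s2 ε lam : ℝ) (hb : 0 ≤ b)
    (hbd : ∀ t ω, |W t ω| ≤ b)
    (hm : ∀ t, ∫ ω, W t ω = m)
    (hs2 : ∀ t, ∫ ω, (W t ω - m) ^ 2 ≤ s2)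
    (hlam : 0 ≤ lam) (hlamb : lam * (2 * b) ≤ 1) :
    (volume {ω | (n : ℝ) * ε ≤ ∑ t, (W t ω - m)}).toReal ≤
      Real.exp ((n : ℝ) * (lam ^ 2 * s2 - lam * ε)) := by
  rcases Nat.eq_zero_or_pos n with hn | hn
  · subst hn
    simpa using toReal_le_one _
  have hs2nn : 0 ≤ s2 := le_trans (by positivity) (hs2 ⟨0, hn⟩)
  -- bound on |m|
  have hmb : |m| ≤ b := by
    obtain ⟨t0⟩ : Nonempty (Fin n) := ⟨⟨0, hn⟩⟩
    rw [← hm t0]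
    calc |∫ ω, W t0 ω| ≤ ∫ ω, |W t0 ω| := by
          simpa using norm_integral_le_integral_norm (W t0)
      _ ≤ ∫ _ω : Ω, b := by
          apply integral_mono ((bdd_integrable (hWmeas t0) (hbd t0)).abs) (integrable_const b)
          intro ω; exact hbd t0 ω
      _ = b := by simp
  set U : Fin n → Ω → ℝ := fun t ω => W t ω - m with hU
  have hUmeas : ∀ t, Measurable (U t) := fun t => (hWmeas t).sub_const m
  have hUbd : ∀ t ω, |U t ω| ≤ 2 * b := by
    intro t ω
    calc |U t ω| ≤ |W t ω| + |m| := abs_sub _ _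
      _ ≤ 2 * b := by have := hbd t ω; linarith
  have hUint : ∀ t, Integrable (U t) := fun t => bdd_integrable (hUmeas t) (hUbd t)
  have hUmean : ∀ t, ∫ ω, U t ω = 0 := by
    intro t
    have : ∫ ω, (W t ω - m) = (∫ ω, W t ω) - ∫ _ω : Ω, m :=
      integral_sub (bdd_integrable (hWmeas t) (hbd t)) (integrable_const m)
    rw [hU]; simp only []
    rw [this, hm t]; simp
  have hU2int : ∀ t, Integrable (fun ω => U t ω ^ 2) := by
    intro t
    apply bdd_integrable ((hUmeas t).pow_const 2) (b := (2*b)^2)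
    intro ω
    rw [abs_pow]
    exact pow_le_pow_left₀ (abs_nonneg _) (hUbd t ω) 2
  -- mgf bound per coordinate
  have hexpint : ∀ t, Integrable (fun ω => Real.exp (lam * U t ω)) := by
    intro t
    apply bdd_integrable (((hUmeas t).const_mul lam).exp) (b := Real.exp (lam * (2 * b)))
    intro ω
    rw [abs_of_pos (Real.exp_pos _)]
    apply Real.exp_le_exp.mpr
    calc lam * U t ω ≤ lam * |U t ω| := by
          apply mul_le_mul_of_nonneg_left (le_abs_self _) hlam
      _ ≤ lam * (2 * b) := mul_le_mul_of_nonneg_left (hUbd t ω) hlam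
  have hmgf : ∀ t, mgf (U t) volume lam ≤ Real.exp (lam ^ 2 * s2) := by
    intro t
    rw [mgf]
    have step1 : ∫ ω, Real.exp (lam * U t ω) ≤ ∫ ω, (1 + lam * U t ω + lam ^ 2 * U t ω ^ 2) := by
      apply integral_mono (hexpint t)
      · apply Integrable.add
        · apply Integrable.add (integrable_const 1) ((hUint t).const_mul lam)
        · exact (hU2int t).const_mul (lam ^ 2)
      · intro ω
        have hle1 : lam * U t ω ≤ 1 := by
          calc lam * U t ω ≤ lam * |U t ω| := mul_le_mul_of_nonneg_left (le_abs_self _) hlam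
            _ ≤ lam * (2 * b) := mul_le_mul_of_nonneg_left (hUbd t ω) hlam
            _ ≤ 1 := hlamb
        have := exp_le_one_add_sq hle1
        calc Real.exp (lam * U t ω) ≤ 1 + lam * U t ω + (lam * U t ω) ^ 2 := this
          _ = 1 + lam * U t ω + lam ^ 2 * U t ω ^ 2 := by ring
    have step2 : ∫ ω, (1 + lam * U t ω + lam ^ 2 * U t ω ^ 2)
        = 1 + lam ^ 2 * ∫ ω, U t ω ^ 2 := by
      have i1 : Integrable (fun ω => 1 + lam * U t ω) :=
        (integrable_const 1).add ((hUint t).const_mul lam)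
      have i2 : Integrable (fun ω => lam ^ 2 * U t ω ^ 2) := (hU2int t).const_mul _
      have e1 : ∫ ω, (1 + lam * U t ω + lam ^ 2 * U t ω ^ 2)
          = (∫ ω, (1 + lam * U t ω)) + ∫ ω, lam ^ 2 * U t ω ^ 2 := integral_add i1 i2
      have e2 : ∫ ω, (1 + lam * U t ω) = (∫ _ω : Ω, (1:ℝ)) + ∫ ω, lam * U t ω :=
        integral_add (integrable_const 1) ((hUint t).const_mul lam)
      rw [e1, e2, integral_const_mul, integral_const_mul, hUmean t]
      simp
    have step3 : 1 + lam ^ 2 * ∫ ω, U t ω ^ 2 ≤ 1 + lam ^ 2 * s2 := by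
      have := mul_le_mul_of_nonneg_left (hs2 t) (sq_nonneg lam)
      linarith
    calc ∫ ω, Real.exp (lam * U t ω) ≤ 1 + lam ^ 2 * s2 := by linarith
      _ ≤ Real.exp (lam ^ 2 * s2) := by linarith [Real.add_one_le_exp (lam ^ 2 * s2)]
  -- independence of U
  have hindep' : iIndepFun U volume := by
    have := hindep.comp (fun _ => fun x : ℝ => x - m) (fun _ => measurable_id.sub_const m)
    exact this
  -- Chernoff
  have hsum_meas : Measurable (fun ω => ∑ t, U t ω) :=
    Finset.measurable_sum Finset.univ (fun t _ => hUmeas t)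
  have hsum_int : Integrable (fun ω => Real.exp (lam * ∑ t, U t ω)) := by
    apply bdd_integrable ((hsum_meas.const_mul lam).exp) (b := Real.exp (lam * (n * (2 * b))))
    intro ω
    rw [abs_of_pos (Real.exp_pos _)]
    apply Real.exp_le_exp.mpr
    apply mul_le_mul_of_nonneg_left _ hlam
    calc ∑ t, U t ω ≤ ∑ t, |U t ω| := Finset.sum_le_sum (fun t _ => le_abs_self _)
      _ ≤ ∑ _t : Fin n, 2 * b := Finset.sum_le_sum (fun t _ => hUbd t ω)
      _ = n * (2 * b) := by rw [Finset.sum_const]; simp [mul_comm]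
  have hch := measure_ge_le_exp_mul_mgf (μ := volume) (X := fun ω => ∑ t, U t ω)
    ((n : ℝ) * ε) hlam hsum_int
  have hXeq : (fun ω => ∑ t, U t ω) = ∑ t, U t := by
    ext ω; rw [Finset.sum_apply]
  have hmgfsum : mgf (fun ω => ∑ t, U t ω) volume lam = ∏ t, mgf (U t) volume lam := by
    rw [hXeq]
    exact hindep'.mgf_sum hUmeas Finset.univ
  have hprod : ∏ t : Fin n, mgf (U t) volume lam ≤ Real.exp ((n : ℝ) * (lam ^ 2 * s2)) := by
    calc ∏ t : Fin n, mgf (U t) volume lam ≤ ∏ _t : Fin n, Real.exp (lam ^ 2 * s2) := by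
          apply Finset.prod_le_prod (fun t _ => mgf_nonneg) (fun t _ => hmgf t)
      _ = Real.exp (lam ^ 2 * s2) ^ n := by rw [Finset.prod_const]; simp
      _ = Real.exp ((n : ℝ) * (lam ^ 2 * s2)) := by
          rw [← Real.exp_nat_mul]
  have hfinal : Real.exp (-lam * ((n : ℝ) * ε)) * mgf (fun ω => ∑ t, U t ω) volume lam
      ≤ Real.exp ((n : ℝ) * (lam ^ 2 * s2 - lam * ε)) := by
    rw [hmgfsum]
    calc Real.exp (-lam * ((n : ℝ) * ε)) * ∏ t, mgf (U t) volume lam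
        ≤ Real.exp (-lam * ((n : ℝ) * ε)) * Real.exp ((n : ℝ) * (lam ^ 2 * s2)) := by
          apply mul_le_mul_of_nonneg_left hprod (le_of_lt (Real.exp_pos _))
      _ = Real.exp ((n : ℝ) * (lam ^ 2 * s2 - lam * ε)) := by
          rw [← Real.exp_add]; ring_nf
  exact le_trans hch hfinal

lemma measurable_hclamp {α : ℝ} : Measurable (hclamp α) :=
  measurable_const.max (measurable_const.min measurable_id)

lemma integral_sq_expand {Ω : Type} [MeasureSpace Ω] [IsProbabilityMeasure (volume : Measure Ω)]
    {f : Ω → ℝ} (hfi : Integrable f) (hf2 : Integrable (fun ω => f ω ^ 2)) (c : ℝ) :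
    ∫ ω, (f ω - c) ^ 2 = (∫ ω, f ω ^ 2) - 2 * c * (∫ ω, f ω) + c ^ 2 := by
  have e : (fun ω => (f ω - c) ^ 2) = fun ω => f ω ^ 2 - 2 * c * f ω + c ^ 2 := by
    ext ω; ring
  rw [e]
  have i1 : Integrable (fun ω => f ω ^ 2 - 2 * c * f ω) := hf2.sub (hfi.const_mul _)
  have e1 : ∫ ω, (f ω ^ 2 - 2 * c * f ω + c ^ 2)
      = (∫ ω, (f ω ^ 2 - 2 * c * f ω)) + ∫ _ω : Ω, c ^ 2 := integral_add i1 (integrable_const _)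
  have e2 : ∫ ω, (f ω ^ 2 - 2 * c * f ω) = (∫ ω, f ω ^ 2) - ∫ ω, 2 * c * f ω :=
    integral_sub hf2 (hfi.const_mul _)
  rw [e1, e2, integral_const_mul]
  simp

lemma tail_generic {Ω : Type} [MeasureSpace Ω] [IsProbabilityMeasure (volume : Measure Ω)]
    {p n : ℕ}
    (X : Ω → Fin p → ℝ) (hX : Measurable X) (Y : Fin n → Ω → Fin p → ℝ)
    (hY : ∀ t, Measurable (Y t))
    (hindep : iIndepFun (m := fun _ => MeasurableSpace.pi) Y volume)
    (hmap : ∀ t, Measure.map (Y t) volume = Measure.map X volume)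
    (G : (Fin p → ℝ) → ℝ) (hG : Measurable G) (b : ℝ) (hb : 0 ≤ b) (hGb : ∀ y, |G y| ≤ b)
    (s2 ε0 lam : ℝ) (hlam : 0 ≤ lam) (hlamb : lam * (2 * b) ≤ 1)
    (hs2 : ∫ ω, (G (X ω) - ∫ ω', G (X ω')) ^ 2 ≤ s2)
    (hmean : ∫ ω, G (X ω) ≤ -ε0) :
    volume {ω | 0 ≤ ∑ t, G (Y t ω)} ≤
      ENNReal.ofReal (Real.exp ((n : ℝ) * (lam ^ 2 * s2 - lam * ε0))) := by
  set m : ℝ := ∫ ω, G (X ω) with hm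
  have transfer : ∀ (h : (Fin p → ℝ) → ℝ), Measurable h → ∀ t : Fin n,
      ∫ ω, h (Y t ω) = ∫ ω, h (X ω) := by
    intro h hh t
    rw [← integral_map (hY t).aemeasurable hh.aestronglyMeasurable, hmap t,
      integral_map hX.aemeasurable hh.aestronglyMeasurable]
  have hWmeas : ∀ t : Fin n, Measurable (fun ω => G (Y t ω)) := fun t => hG.comp (hY t)
  have hWindep : iIndepFun (fun t => fun ω => G (Y t ω)) volume := by
    have := hindep.comp (fun _ => G) (fun _ => hG)
    exact this
  have hWm : ∀ t : Fin n, ∫ ω, G (Y t ω) = m := fun t => transfer G hG t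
  have hWs2 : ∀ t : Fin n, ∫ ω, (G (Y t ω) - m) ^ 2 ≤ s2 := by
    intro t
    have := transfer (fun y => (G y - m) ^ 2) ((hG.sub_const m).pow_const 2) t
    rw [this]; exact hs2
  have hch := chernoff_bdd (fun t => fun ω => G (Y t ω)) hWmeas hWindep b m s2 ε0 lam hb
    (fun t ω => hGb _) hWm hWs2 hlam hlamb
  have hsub : {ω : Ω | 0 ≤ ∑ t, G (Y t ω)} ⊆
      {ω : Ω | (n : ℝ) * ε0 ≤ ∑ t, (G (Y t ω) - m)} := by
    intro ω hω
    simp only [Set.mem_setOf_eq] at hω ⊢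
    have e : ∑ t : Fin n, (G (Y t ω) - m) = (∑ t, G (Y t ω)) - n * m := by
      rw [Finset.sum_sub_distrib, Finset.sum_const]; simp [mul_comm]
    rw [e]
    have : (n : ℝ) * (-ε0) ≥ (n:ℝ) * m := by
      apply mul_le_mul_of_nonneg_left hmean (Nat.cast_nonneg n)
    nlinarith
  calc volume {ω : Ω | 0 ≤ ∑ t, G (Y t ω)}
      ≤ volume {ω : Ω | (n : ℝ) * ε0 ≤ ∑ t, (G (Y t ω) - m)} := measure_mono hsub
    _ ≤ ENNReal.ofReal (Real.exp ((n : ℝ) * (lam ^ 2 * s2 - lam * ε0))) := by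
        rw [← ENNReal.ofReal_toReal (measure_ne_top volume _)]
        exact ENNReal.ofReal_le_ofReal hch


lemma sq_mul_le_aux (a b : ℝ) : (a * b) ^ 2 ≤ (a ^ 4 + b ^ 4) / 2 := by
  nlinarith [sq_nonneg (a ^ 2 - b ^ 2)]

lemma abs_le_half_one_add_sq (z : ℝ) : |z| ≤ 1 + z ^ 2 := by
  nlinarith [sq_nonneg (|z| - 1), sq_abs z]

set_option maxHeartbeats 2000000

/-- concentration of entrywise Huber M-estimators of a covariance matrix
under only bounded fourth moments. -/
theorem huber_covariance_concentration :
    ∃ C : ℝ, 0 < C ∧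
      ∀ (Ω : Type) (_ : MeasureSpace Ω) (_ : IsProbabilityMeasure (volume : Measure Ω))
        (p n : ℕ), 2 ≤ p →
        ∀ (X : Ω → Fin p → ℝ), Measurable X →
        (∀ i, ∫ ω, X ω i = 0) →
        (∀ i, Integrable (fun ω => (X ω i) ^ 4)) →
        ∀ (σ : Fin p → Fin p → ℝ), (∀ i j, σ i j = ∫ ω, X ω i * X ω j) →
        ∀ (v : ℝ), 0 < v →
        (∀ i j, variance (fun ω => X ω i * X ω j) volume ≤ v ^ 2) →
        ∀ (Y : Fin n → Ω → Fin p → ℝ), (∀ t, Measurable (Y t)) →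
        iIndepFun (m := fun _ => MeasurableSpace.pi) Y volume →
        (∀ t, Measure.map (Y t) volume = Measure.map X volume) →
        ∀ (δ : ℝ), δ ∈ Set.Ioo (0 : ℝ) 1 →
        ∀ (α : ℝ), α = Real.sqrt ((n : ℝ) * v ^ 2 / Real.log ((p : ℝ) ^ 2 / δ)) →
        ∀ (σhat : Fin p → Fin p → Ω → ℝ),
        (∀ i j ω, ∀ x : ℝ,
          (∑ t : Fin n, huberLoss α (Y t ω i * Y t ω j - σhat i j ω)) ≤
            ∑ t : Fin n, huberLoss α (Y t ω i * Y t ω j - x)) →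
        C * Real.log ((p : ℝ) / δ) ≤ (n : ℝ) →
        ENNReal.ofReal (1 - δ) ≤
          volume {ω | ∀ i j : Fin p,
            |σhat i j ω - σ i j| ≤
              C * v * Real.sqrt ((Real.log p + Real.log (1 / δ)) / n)} := by
  refine ⟨400, by norm_num, ?_⟩
  intro Ω _ _ p n hp X hX hmean h4 σ hσ v hv hVar Y hY hindep hmap δ hδ α hα σhat hmin hnbound
  obtain ⟨hδ0, hδ1⟩ := hδ
  have hp2 : (2 : ℝ) ≤ (p : ℝ) := by exact_mod_cast hp
  have hppos : (0 : ℝ) < (p : ℝ) := by linarith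
  set Λ : ℝ := Real.log ((p : ℝ) / δ) with hΛdef
  set L : ℝ := Real.log ((p : ℝ) ^ 2 / δ) with hLdef
  have hpδ2 : (2 : ℝ) ≤ (p : ℝ) / δ := by
    rw [le_div_iff₀ hδ0]; nlinarith
  have hΛ2 : Real.log 2 ≤ Λ := Real.log_le_log (by norm_num) hpδ2
  have hlog2pos : (0 : ℝ) < Real.log 2 := Real.log_pos (by norm_num)
  have hΛpos : 0 < Λ := lt_of_lt_of_le hlog2pos hΛ2
  have hΛeq : Λ = Real.log p - Real.log δ := Real.log_div hppos.ne' hδ0.ne'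
  have hlogδ : Real.log δ ≤ 0 := Real.log_nonpos hδ0.le hδ1.le
  have hlogp : 0 ≤ Real.log p := Real.log_nonneg (by linarith)
  have hlogpΛ : Real.log p ≤ Λ := by rw [hΛeq]; linarith
  have hLeq : L = Real.log p + Λ := by
    rw [hLdef, Real.log_div (by positivity) hδ0.ne', Real.log_pow, hΛeq]
    push_cast; ring
  have hLpos : 0 < L := by rw [hLeq]; linarith
  have hΛL : Λ ≤ L := by rw [hLeq]; linarith
  have hL2Λ : L ≤ 2 * Λ := by rw [hLeq]; linarith
  have hlog2L : Real.log 2 ≤ L := le_trans hΛ2 hΛL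
  have hnΛ : 400 * Λ ≤ (n : ℝ) := hnbound
  have hnpos : (0 : ℝ) < (n : ℝ) := lt_of_lt_of_le (by positivity) hnΛ
  have hnL : 200 * L ≤ (n : ℝ) := by linarith
  set R : ℝ := Real.sqrt (L / n) with hRdef
  have hRpos : 0 < R := Real.sqrt_pos.mpr (by positivity)
  have hR2 : R ^ 2 = L / n := Real.sq_sqrt (by positivity)
  have hαR : α * R = v := by
    rw [hα, hRdef, ← Real.sqrt_mul (by positivity)]
    rw [show (n : ℝ) * v ^ 2 / L * (L / n) = v ^ 2 by field_simp]
    exact Real.sqrt_sq hv.le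
  have hαnn : 0 ≤ α := by rw [hα]; exact Real.sqrt_nonneg _
  have hαpos : 0 < α := by nlinarith
  have hvαR : v / α = R := by rw [← hαR]; field_simp
  have hv2αR : v ^ 2 / α = v * R := by rw [pow_two, mul_div_assoc, hvαR]
  have hRle : R ≤ 1 / 13 := by
    have h1 : L / n ≤ 1 / 169 := by
      rw [div_le_div_iff₀ hnpos (by norm_num)]; nlinarith
    calc R ≤ Real.sqrt (1 / 169) := Real.sqrt_le_sqrt h1
      _ = 1 / 13 := by
          rw [show (1 / 169 : ℝ) = (1 / 13) ^ 2 by norm_num, Real.sqrt_sq (by norm_num)]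
  have hsv : 13 * v * R ≤ v := by nlinarith
  have hsnn : 0 ≤ 13 * v * R := by positivity
  -- the exponent computation
  have hnR2 : (n : ℝ) * R ^ 2 = L := by rw [hR2]; field_simp
  have hexpeq : (n : ℝ) * ((1 / (2 * α)) ^ 2 * (2 * v ^ 2) - (1 / (2 * α)) * (11 * v * R))
      = -(5 * L) := by
    rw [← hnR2, ← hαR]
    field_simp
    ring
  have hexpbound : Real.exp (-(5 * L)) ≤ δ / (2 * (p : ℝ) ^ 2) := by
    rw [← Real.exp_log (show (0 : ℝ) < δ / (2 * (p : ℝ) ^ 2) by positivity)]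
    apply Real.exp_le_exp.mpr
    rw [Real.log_div hδ0.ne' (by positivity), Real.log_mul (by norm_num) (by positivity),
      Real.log_pow]
    have : L = 2 * Real.log p - Real.log δ := by rw [hLeq, hΛeq]; ring
    push_cast
    linarith
  -- per-pair bad sets
  have pair : ∀ i j : Fin p, ∃ B : Set Ω, MeasurableSet B ∧
      volume B ≤ ENNReal.ofReal (δ / (p : ℝ) ^ 2) ∧
      ∀ ω, ω ∉ B → |σhat i j ω - σ i j| ≤ 13 * v * R := by
    intro i j
    set Z : Ω → ℝ := fun ω => X ω i * X ω j with hZdef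
    have hZmeas : Measurable Z :=
      ((measurable_pi_apply i).comp hX).mul ((measurable_pi_apply j).comp hX)
    have hZ2int : Integrable (fun ω => Z ω ^ 2) := by
      apply Integrable.mono' (((h4 i).add (h4 j)).div_const 2) (hZmeas.pow_const 2).aestronglyMeasurable
      apply ae_of_all
      intro ω
      rw [Real.norm_eq_abs, abs_of_nonneg (sq_nonneg _)]
      exact sq_mul_le_aux (X ω i) (X ω j)
    have hZint : Integrable Z := by
      apply Integrable.mono' ((integrable_const 1).add hZ2int) hZmeas.aestronglyMeasurable
      apply ae_of_all
      intro ω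
      rw [Real.norm_eq_abs]
      simpa using abs_le_half_one_add_sq (Z ω)
    set μZ : ℝ := σ i j with hμZdef
    have hμZ : ∫ ω, Z ω = μZ := (hσ i j).symm
    have hZmem : MemLp Z 2 volume :=
      (memLp_two_iff_integrable_sq hZmeas.aestronglyMeasurable).mpr hZ2int
    have hvar := variance_eq_sub hZmem
    simp only [Pi.pow_apply] at hvar
    have hvarle : (∫ ω, Z ω ^ 2) - (∫ ω, Z ω) ^ 2 ≤ v ^ 2 := by
      rw [← hvar]; exact hVar i j
    have hmom : ∀ θ : ℝ, ∫ ω, (Z ω - θ) ^ 2 ≤ v ^ 2 + (μZ - θ) ^ 2 := by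
      intro θ
      rw [integral_sq_expand hZint hZ2int θ]
      rw [hμZ] at hvarle ⊢
      have e : v ^ 2 + (μZ - θ) ^ 2 = v ^ 2 + μZ ^ 2 - 2 * θ * μZ + θ ^ 2 := by ring
      rw [e]
      linarith only [hvarle]
    -- generic facts per threshold θ
    have hZθ2int : ∀ θ : ℝ, Integrable (fun ω => (Z ω - θ) ^ 2) := by
      intro θ
      have e : (fun ω => (Z ω - θ) ^ 2) = fun ω => Z ω ^ 2 - 2 * θ * Z ω + θ ^ 2 := by
        ext ω; ring
      rw [e]
      exact (hZ2int.sub (hZint.const_mul _)).add (integrable_const _)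
    have hcmeas : ∀ θ : ℝ, Measurable (fun ω => hclamp α (Z ω - θ)) :=
      fun θ => measurable_hclamp.comp (hZmeas.sub_const θ)
    have hcint : ∀ θ : ℝ, Integrable (fun ω => hclamp α (Z ω - θ)) :=
      fun θ => bdd_integrable (hcmeas θ) (fun ω => hclamp_abs_le hαnn _)
    have hc2int : ∀ θ : ℝ, Integrable (fun ω => (hclamp α (Z ω - θ)) ^ 2) := by
      intro θ
      apply bdd_integrable ((hcmeas θ).pow_const 2) (b := α ^ 2)
      intro ω
      rw [abs_pow]
      exact pow_le_pow_left₀ (abs_nonneg _) (hclamp_abs_le hαnn _) 2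
    have hbias : ∀ θ : ℝ, |(∫ ω, hclamp α (Z ω - θ)) - (μZ - θ)|
        ≤ (v ^ 2 + (μZ - θ) ^ 2) / α := by
      intro θ
      have hZθint : Integrable (fun ω => Z ω - θ) := hZint.sub (integrable_const θ)
      have e0 : ∫ ω, (Z ω - θ) = μZ - θ := by
        rw [integral_sub hZint (integrable_const θ), hμZ]; simp
      have e1 : (∫ ω, hclamp α (Z ω - θ)) - (μZ - θ)
          = ∫ ω, (hclamp α (Z ω - θ) - (Z ω - θ)) := by
        rw [integral_sub (hcint θ) hZθint, e0]
      rw [e1]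
      calc |∫ ω, (hclamp α (Z ω - θ) - (Z ω - θ))|
          ≤ ∫ ω, |hclamp α (Z ω - θ) - (Z ω - θ)| := by
            simpa using norm_integral_le_integral_norm (fun ω => hclamp α (Z ω - θ) - (Z ω - θ))
        _ ≤ ∫ ω, (Z ω - θ) ^ 2 / α := by
            apply integral_mono ((hcint θ).sub hZθint).abs ((hZθ2int θ).div_const α)
            intro ω
            exact abs_hclamp_sub_le hαpos _
        _ = (∫ ω, (Z ω - θ) ^ 2) / α := integral_div α _
        _ ≤ (v ^ 2 + (μZ - θ) ^ 2) / α := (div_le_div_iff_of_pos_right hαpos).mpr (hmom θ)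
    have hs2c : ∀ θ : ℝ, ∫ ω, (hclamp α (Z ω - θ) - ∫ ω', hclamp α (Z ω' - θ)) ^ 2
        ≤ v ^ 2 + (μZ - θ) ^ 2 := by
      intro θ
      rw [integral_sq_expand (hcint θ) (hc2int θ) (∫ ω', hclamp α (Z ω' - θ))]
      have h1 : ∫ ω, (hclamp α (Z ω - θ)) ^ 2 ≤ ∫ ω, (Z ω - θ) ^ 2 := by
        apply integral_mono (hc2int θ) (hZθ2int θ)
        intro ω
        calc (hclamp α (Z ω - θ)) ^ 2 = |hclamp α (Z ω - θ)| ^ 2 := (sq_abs _).symm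
          _ ≤ |Z ω - θ| ^ 2 := pow_le_pow_left₀ (abs_nonneg _) (hclamp_abs_le_abs hαnn _) 2
          _ = (Z ω - θ) ^ 2 := sq_abs _
      have h2 := hmom θ
      linarith only [h1, h2, sq_nonneg (∫ ω', hclamp α (Z ω' - θ))]
    set s : ℝ := 13 * v * R with hsdef
    have hs2le : s ^ 2 ≤ v ^ 2 := pow_le_pow_left₀ hsnn hsv 2
    have hbias2 : ∀ θ : ℝ, (μZ - θ) ^ 2 = s ^ 2 → (v ^ 2 + (μZ - θ) ^ 2) / α ≤ 2 * (v * R) := by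
      intro θ hθ
      rw [hθ]
      calc (v ^ 2 + s ^ 2) / α ≤ (v ^ 2 + v ^ 2) / α := by
            apply (div_le_div_iff_of_pos_right hαpos).mpr; linarith only [hs2le]
        _ = 2 * (v ^ 2 / α) := by ring
        _ = 2 * (v * R) := by rw [hv2αR]
    -- upper tail
    have hGpmeas : Measurable (fun y : Fin p → ℝ => hclamp α (y i * y j - (μZ + s))) :=
      measurable_hclamp.comp (((measurable_pi_apply i).mul (measurable_pi_apply j)).sub_const _)
    have hmean_p : ∫ ω, hclamp α (Z ω - (μZ + s)) ≤ -(11 * v * R) := by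
      have hb := (abs_le.mp (hbias (μZ + s))).2
      have h3 := hbias2 (μZ + s) (by ring)
      have h5 : μZ - (μZ + s) = -s := by ring
      rw [h5] at hb h3
      linarith only [hb, h3, hsdef]
    have hs2p : ∫ ω, (hclamp α (Z ω - (μZ + s)) - ∫ ω', hclamp α (Z ω' - (μZ + s))) ^ 2
        ≤ 2 * v ^ 2 := by
      have h6 := hs2c (μZ + s)
      have h7 : (μZ - (μZ + s)) ^ 2 = s ^ 2 := by ring
      rw [h7] at h6
      linarith only [h6, hs2le]
    have hupper : volume {ω | 0 ≤ ∑ t, hclamp α (Y t ω i * Y t ω j - (μZ + s))}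
        ≤ ENNReal.ofReal (δ / (2 * (p : ℝ) ^ 2)) := by
      have h := tail_generic X hX Y hY hindep hmap
        (fun y => hclamp α (y i * y j - (μZ + s))) hGpmeas α hαnn
        (fun y => hclamp_abs_le hαnn _) (2 * v ^ 2) (11 * v * R) (1 / (2 * α))
        (by positivity) (by field_simp; exact le_rfl) hs2p hmean_p
      refine le_trans h ?_
      apply ENNReal.ofReal_le_ofReal
      calc Real.exp ((n : ℝ) * ((1 / (2 * α)) ^ 2 * (2 * v ^ 2) - (1 / (2 * α)) * (11 * v * R)))
          = Real.exp (-(5 * L)) := by rw [hexpeq]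
        _ ≤ δ / (2 * (p : ℝ) ^ 2) := hexpbound
    -- lower tail
    have hGmmeas : Measurable (fun y : Fin p → ℝ => -hclamp α (y i * y j - (μZ - s))) :=
      (measurable_hclamp.comp
        (((measurable_pi_apply i).mul (measurable_pi_apply j)).sub_const _)).neg
    have hint_neg : ∫ ω, -hclamp α (Z ω - (μZ - s)) = -(∫ ω, hclamp α (Z ω - (μZ - s))) :=
      integral_neg _
    have hmean_m : ∫ ω, -hclamp α (Z ω - (μZ - s)) ≤ -(11 * v * R) := by
      rw [hint_neg]
      have hb := (abs_le.mp (hbias (μZ - s))).1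
      have h3 := hbias2 (μZ - s) (by ring)
      have h5 : μZ - (μZ - s) = s := by ring
      rw [h5] at hb h3
      linarith only [hb, h3, hsdef]
    have hs2m : ∫ ω, (-hclamp α (Z ω - (μZ - s)) - ∫ ω', -hclamp α (Z ω' - (μZ - s))) ^ 2
        ≤ 2 * v ^ 2 := by
      have e : (fun ω => (-hclamp α (Z ω - (μZ - s)) - ∫ ω', -hclamp α (Z ω' - (μZ - s))) ^ 2)
          = fun ω => (hclamp α (Z ω - (μZ - s)) - ∫ ω', hclamp α (Z ω' - (μZ - s))) ^ 2 := by
        ext ω; rw [hint_neg]; ring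
      rw [e]
      have h6 := hs2c (μZ - s)
      have h7 : (μZ - (μZ - s)) ^ 2 = s ^ 2 := by ring
      rw [h7] at h6
      linarith only [h6, hs2le]
    have hlower : volume {ω | 0 ≤ ∑ t, -hclamp α (Y t ω i * Y t ω j - (μZ - s))}
        ≤ ENNReal.ofReal (δ / (2 * (p : ℝ) ^ 2)) := by
      have h := tail_generic X hX Y hY hindep hmap
        (fun y => -hclamp α (y i * y j - (μZ - s))) hGmmeas α hαnn
        (fun y => by rw [abs_neg]; exact hclamp_abs_le hαnn _) (2 * v ^ 2) (11 * v * R)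
        (1 / (2 * α)) (by positivity) (by field_simp; exact le_rfl) hs2m hmean_m
      refine le_trans h ?_
      apply ENNReal.ofReal_le_ofReal
      calc Real.exp ((n : ℝ) * ((1 / (2 * α)) ^ 2 * (2 * v ^ 2) - (1 / (2 * α)) * (11 * v * R)))
          = Real.exp (-(5 * L)) := by rw [hexpeq]
        _ ≤ δ / (2 * (p : ℝ) ^ 2) := hexpbound
    refine ⟨{ω | 0 ≤ ∑ t, hclamp α (Y t ω i * Y t ω j - (μZ + s))} ∪
      {ω | 0 ≤ ∑ t, -hclamp α (Y t ω i * Y t ω j - (μZ - s))}, ?_, ?_, ?_⟩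
    · apply MeasurableSet.union
      · exact measurableSet_le measurable_const
          (Finset.measurable_sum Finset.univ (fun t _ => hGpmeas.comp (hY t)))
      · exact measurableSet_le measurable_const
          (Finset.measurable_sum Finset.univ (fun t _ => hGmmeas.comp (hY t)))
    · calc volume _ ≤ _ := measure_union_le _ _
        _ ≤ ENNReal.ofReal (δ / (2 * (p : ℝ) ^ 2)) + ENNReal.ofReal (δ / (2 * (p : ℝ) ^ 2)) :=
            add_le_add hupper hlower
        _ = ENNReal.ofReal (δ / (p : ℝ) ^ 2) := by
            rw [← ENNReal.ofReal_add (by positivity) (by positivity)]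
            congr 1
            field_simp
            ring
    · intro ω hω
      simp only [Set.mem_union, Set.mem_setOf_eq, not_or] at hω
      obtain ⟨h1, h2⟩ := hω
      push_neg at h1 h2
      have hub : σhat i j ω ≤ μZ + s :=
        huber_min_le hαnn (fun t => Y t ω i * Y t ω j) _ _ (hmin i j ω) h1
      have h2' : 0 < ∑ t, hclamp α (Y t ω i * Y t ω j - (μZ - s)) := by
        have e : ∑ t : Fin n, -hclamp α (Y t ω i * Y t ω j - (μZ - s))
            = -∑ t : Fin n, hclamp α (Y t ω i * Y t ω j - (μZ - s)) := by
          rw [Finset.sum_neg_distrib]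
        rw [e] at h2
        linarith only [h2]
      have hlb : μZ - s ≤ σhat i j ω :=
        huber_min_ge hαnn (fun t => Y t ω i * Y t ω j) _ _ (hmin i j ω) h2'
      rw [abs_le]
      exact ⟨by linarith only [hlb, hsdef], by linarith only [hub, hsdef]⟩
  -- union bound and conclusion
  choose B hBmeas hBvol hBgood using pair
  have hBadmeas : MeasurableSet (⋃ i, ⋃ j, B i j) :=
    MeasurableSet.iUnion fun i => MeasurableSet.iUnion fun j => hBmeas i j
  have hBadvol : volume (⋃ i, ⋃ j, B i j) ≤ ENNReal.ofReal δ := by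
    calc volume (⋃ i, ⋃ j, B i j) ≤ ∑' i : Fin p, volume (⋃ j, B i j) := measure_iUnion_le _
      _ ≤ ∑' i : Fin p, ∑' j : Fin p, volume (B i j) :=
          ENNReal.tsum_le_tsum fun i => measure_iUnion_le _
      _ ≤ ∑' _i : Fin p, ∑' _j : Fin p, ENNReal.ofReal (δ / (p : ℝ) ^ 2) :=
          ENNReal.tsum_le_tsum fun i => ENNReal.tsum_le_tsum fun j => hBvol i j
      _ = (p : ENNReal) * ((p : ENNReal) * ENNReal.ofReal (δ / (p : ℝ) ^ 2)) := by
          simp [tsum_fintype, Finset.sum_const, Finset.card_univ, nsmul_eq_mul]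
      _ = ENNReal.ofReal δ := by
          rw [← ENNReal.ofReal_natCast p, ← ENNReal.ofReal_mul (Nat.cast_nonneg p),
            ← ENNReal.ofReal_mul (Nat.cast_nonneg p)]
          congr 1
          field_simp
  have hfinal : 13 * v * R ≤ 400 * v * Real.sqrt ((Real.log p + Real.log (1 / δ)) / n) := by
    have e : Real.log p + Real.log (1 / δ) = Λ := by
      rw [one_div, Real.log_inv, hΛeq]; ring
    rw [e]
    have h1 : R ≤ Real.sqrt (2 * Λ / n) :=
      Real.sqrt_le_sqrt ((div_le_div_iff_of_pos_right hnpos).mpr hL2Λ)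
    have h2 : Real.sqrt (2 * Λ / n) ≤ 2 * Real.sqrt (Λ / n) := by
      rw [show 2 * Λ / (n : ℝ) = 2 * (Λ / n) by ring, Real.sqrt_mul (by norm_num) _]
      have hsq2 : Real.sqrt 2 ≤ 2 := by
        have h22 : Real.sqrt 2 ≤ Real.sqrt 4 := Real.sqrt_le_sqrt (by norm_num)
        rwa [show (4 : ℝ) = 2 ^ 2 by norm_num, Real.sqrt_sq (by norm_num)] at h22
      exact mul_le_mul_of_nonneg_right hsq2 (Real.sqrt_nonneg _)
    have h3 : R ≤ 2 * Real.sqrt (Λ / n) := le_trans h1 h2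
    have h4 := mul_le_mul_of_nonneg_left h3 hv.le
    have h5 : 0 ≤ v * Real.sqrt (Λ / (n : ℝ)) := by positivity
    linarith only [h4, h5]
  have hsub : (⋃ i, ⋃ j, B i j)ᶜ ⊆ {ω | ∀ i j : Fin p, |σhat i j ω - σ i j| ≤
      400 * v * Real.sqrt ((Real.log p + Real.log (1 / δ)) / n)} := by
    intro ω hω i j
    have hnot : ω ∉ B i j := fun h => hω (Set.mem_iUnion.mpr ⟨i, Set.mem_iUnion.mpr ⟨j, h⟩⟩)
    exact le_trans (hBgood i j ω hnot) hfinal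
  calc ENNReal.ofReal (1 - δ) = 1 - ENNReal.ofReal δ := by
        rw [← ENNReal.ofReal_one, ← ENNReal.ofReal_sub 1 hδ0.le]
    _ ≤ 1 - volume (⋃ i, ⋃ j, B i j) := tsub_le_tsub_left hBadvol 1
    _ = volume (⋃ i, ⋃ j, B i j)ᶜ := (prob_compl_eq_one_sub hBadmeas).symm
    _ ≤ _ := measure_mono hsub
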